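/- Let F be the free abelian group on generators e_1, e_2, e_3, ... (indexed by positive integers), and let N be the subgroup generated by the elements e_2, e_{2k+2} + e_{2k} for k ≥ 1, and e_{2k+1} + e_{2k-1} for k ≥ 1. Then the quotient F/N is isomorphic to ℤ, with the class of e_1 as a generator. -/

import Mathlib

/-- The free abelian group on generators e_1, e_2, ... indexed by positive integers. -/
abbrev F : Type := ℕ+ →₀ ℤ

/-- The generator e_i. -/
noncomputable def e (i : ℕ+) : F := Finsupp.single i 1

/-- The subgroup N generated by e_2, e_{2k+2} + e_{2k} (k ≥ 1),
and e_{2k+1} + e_{2k-1} (k ≥ 1). -/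
noncomputable def N : AddSubgroup F := AddSubgroup.closure
  ({e 2} ∪
   {y | ∃ k : ℕ, ∃ _ : 1 ≤ k,
      y = e ⟨2 * k + 2, by omega⟩ + e ⟨2 * k, by omega⟩} ∪
   {y | ∃ k : ℕ, ∃ _ : 1 ≤ k,
      y = e ⟨2 * k + 1, by omega⟩ + e ⟨2 * k - 1, by omega⟩})

/-- The coefficient function: f(2m+1) = (-1)^m, f(even) = 0. -/
def fcoef (i : ℕ+) : ℤ := if i.val % 2 = 1 then (-1 : ℤ) ^ ((i.val - 1) / 2) else 0

noncomputable def phi0 : F →+ ℤ :=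
  Finsupp.liftAddHom (fun i => zmultiplesHom ℤ (fcoef i))

lemma phi0_e (i : ℕ+) : phi0 (e i) = fcoef i := by
  simp [phi0, e]

lemma gen1_mem : e 2 ∈ N :=
  AddSubgroup.subset_closure (Or.inl (Or.inl rfl))

lemma gen2_mem (k : ℕ) (hk : 1 ≤ k) :
    e ⟨2 * k + 2, by omega⟩ + e ⟨2 * k, by omega⟩ ∈ N :=
  AddSubgroup.subset_closure (Or.inl (Or.inr ⟨k, hk, rfl⟩))

lemma gen3_mem (k : ℕ) (hk : 1 ≤ k) :
    e ⟨2 * k + 1, by omega⟩ + e ⟨2 * k - 1, by omega⟩ ∈ N :=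
  AddSubgroup.subset_closure (Or.inr ⟨k, hk, rfl⟩)

lemma even_mem (k : ℕ) (hk : 1 ≤ k) : e ⟨2 * k, by omega⟩ ∈ N := by
  induction k, hk using Nat.le_induction with
  | base => exact gen1_mem
  | succ n hn ih =>
    have h := gen2_mem n hn
    have : e ⟨2 * (n + 1), by omega⟩ =
        (e ⟨2 * n + 2, by omega⟩ + e ⟨2 * n, by omega⟩) - e ⟨2 * n, by omega⟩ := by
      have : (⟨2 * (n + 1), by omega⟩ : ℕ+) = ⟨2 * n + 2, by omega⟩ :=
        Subtype.ext (show 2 * (n + 1) = 2 * n + 2 by omega)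
      rw [this]; abel
    rw [this]
    exact sub_mem h ih

lemma odd_mem (k : ℕ) : e ⟨2 * k + 1, by omega⟩ - ((-1 : ℤ) ^ k) • e 1 ∈ N := by
  induction k with
  | zero =>
    have h1 : (⟨2 * 0 + 1, by omega⟩ : ℕ+) = 1 := rfl
    rw [h1, pow_zero, one_smul]
    convert zero_mem N
    exact sub_eq_zero.mpr rfl
  | succ n ih =>
    have h := gen3_mem (n + 1) (by omega)
    have heq : (⟨2 * (n + 1) - 1, by omega⟩ : ℕ+) = ⟨2 * n + 1, by omega⟩ :=
      Subtype.ext (show 2 * (n + 1) - 1 = 2 * n + 1 by omega)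
    rw [heq] at h
    have : e ⟨2 * (n + 1) + 1, by omega⟩ - ((-1 : ℤ) ^ (n + 1)) • e 1 =
        (e ⟨2 * (n + 1) + 1, by omega⟩ + e ⟨2 * n + 1, by omega⟩)
          - (e ⟨2 * n + 1, by omega⟩ - ((-1 : ℤ) ^ n) • e 1) := by
      rw [pow_succ]
      module
    rw [this]
    exact sub_mem h ih

lemma e_sub_mem (i : ℕ+) : e i - fcoef i • e 1 ∈ N := by
  rcases Nat.even_or_odd i.val with ⟨k, hk⟩ | ⟨k, hk⟩
  · have hk1 : 1 ≤ k := by have := i.pos; omega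
    have hfe : fcoef i = 0 := by
      simp only [fcoef]
      have : i.val % 2 = 0 := by omega
      simp [this]
    have hi : i = ⟨2 * k, by omega⟩ := Subtype.ext (show (i : ℕ) = 2 * k by omega)
    rw [hfe, hi, zero_smul, sub_zero]
    exact even_mem k hk1
  · have hfe : fcoef i = (-1 : ℤ) ^ k := by
      simp only [fcoef]
      have h1 : i.val % 2 = 1 := by omega
      have h2 : (i.val - 1) / 2 = k := by omega
      simp [h1, h2]
    have hi : i = ⟨2 * k + 1, by omega⟩ := Subtype.ext (show (i : ℕ) = 2 * k + 1 by omega)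
    rw [hfe, hi]
    exact odd_mem k

lemma sub_phi0_mem (x : F) : x - phi0 x • e 1 ∈ N := by
  induction x using Finsupp.induction_linear with
  | zero => simpa using zero_mem N
  | add a b ha hb =>
    have : (a + b) - phi0 (a + b) • e 1 =
        (a - phi0 a • e 1) + (b - phi0 b • e 1) := by
      rw [map_add]; module
    rw [this]; exact add_mem ha hb
  | single a c =>
    have h1 : (Finsupp.single a c : F) = c • e a := by
      simp [e, Finsupp.smul_single]
    rw [h1]
    have h2 : phi0 (c • e a) = c * fcoef a := by
      rw [map_zsmul, phi0_e, smul_eq_mul]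
    rw [h2]
    have : c • e a - (c * fcoef a) • e 1 = c • (e a - fcoef a • e 1) := by module
    rw [this]
    exact zsmul_mem (e_sub_mem a) c

lemma N_le_ker : N ≤ phi0.ker := by
  rw [N, AddSubgroup.closure_le]
  rintro x ((h | ⟨k, hk, rfl⟩) | ⟨k, hk, rfl⟩)
  · simp only [Set.mem_singleton_iff] at h
    subst h
    simp [AddMonoidHom.mem_ker, phi0_e, fcoef]
  · simp only [SetLike.mem_coe, AddMonoidHom.mem_ker, map_add, phi0_e]
    have h1 : fcoef ⟨2 * k + 2, by omega⟩ = 0 := by simp [fcoef]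
    have h2 : fcoef ⟨2 * k, by omega⟩ = 0 := by simp [fcoef]
    change phi0 (e ⟨2 * k + 2, by omega⟩) + phi0 (e ⟨2 * k, by omega⟩) = 0
    erw [phi0_e, phi0_e, h1, h2]; ring
  · simp only [SetLike.mem_coe, AddMonoidHom.mem_ker, map_add, phi0_e]
    have h1 : fcoef ⟨2 * k + 1, by omega⟩ = (-1 : ℤ) ^ k := by
      simp only [fcoef]
      have e1 : (2 * k + 1) % 2 = 1 := by omega
      have e2 : (2 * k + 1 - 1) / 2 = k := by omega
      simp [e1, e2]
    have h2 : fcoef ⟨2 * k - 1, by omega⟩ = (-1 : ℤ) ^ (k - 1) := by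
      simp only [fcoef]
      have e1 : (2 * k - 1) % 2 = 1 := by omega
      have e2 : (2 * k - 1 - 1) / 2 = k - 1 := by omega
      simp [e1, e2]
    obtain ⟨m, rfl⟩ : ∃ m, k = m + 1 := ⟨k - 1, by omega⟩
    simp only [Nat.add_sub_cancel] at h2
    change phi0 (e ⟨2 * (m + 1) + 1, by omega⟩) + phi0 (e ⟨2 * (m + 1) - 1, by omega⟩) = 0
    erw [phi0_e, phi0_e, h1, h2, pow_succ]
    ring

/-- F/N is isomorphic to ℤ, with the class of e_1 as a generator. -/
theorem stmt11 : ∃ φ : (F ⧸ N) ≃+ ℤ, φ (QuotientAddGroup.mk (e 1)) = 1 := by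
  let φ' : (F ⧸ N) →+ ℤ := QuotientAddGroup.lift N phi0 N_le_ker
  have hφe : φ' (QuotientAddGroup.mk (e 1)) = 1 := by
    show phi0 (e 1) = 1
    rw [phi0_e]; rfl
  refine ⟨{ toFun := φ'
            invFun := fun n => n • (QuotientAddGroup.mk (e 1) : F ⧸ N)
            left_inv := ?_
            right_inv := ?_
            map_add' := φ'.map_add }, hφe⟩
  · intro q
    induction q using QuotientAddGroup.induction_on with
    | H x =>
      show φ' (QuotientAddGroup.mk x) • (QuotientAddGroup.mk (e 1) : F ⧸ N) = _
      have : φ' (QuotientAddGroup.mk x) = phi0 x := rfl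
      rw [this, ← QuotientAddGroup.mk_zsmul]
      rw [QuotientAddGroup.eq]
      have : -(phi0 x • e 1) + x = x - phi0 x • e 1 := by abel
      rw [this]
      exact sub_phi0_mem x
  · intro n
    show φ' (n • _) = n
    rw [map_zsmul, hφe, smul_eq_mul, mul_one]
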